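/- For every n ≥ 1 and all natural numbers a and b (viewed as finite ordinals), the ordinal operation ⟨a,b⟩_n equals the hyperoperation [a,b]_n. -/

import Mathlib

/-- Goodstein's hyperoperations `[a, b]ₙ` (`n ≥ 1`; the value at `n = 0` is junk). -/
def hyp : ℕ → ℕ → ℕ → ℕ
  | 0, _, _ => 0
  | 1, a, b => a + b
  | 2, _, 0 => 0
  | _ + 3, _, 0 => 1
  | n + 2, a, b + 1 => hyp (n + 1) a (hyp (n + 2) a b)
termination_by n _ b => (n, b)

open Ordinal

/-- The head of the Cantor Normal Form of `β` (for `β ≠ 0`): `ω ^ β₁`. -/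
noncomputable def cnfHead (β : Ordinal) : Ordinal := ω ^ Ordinal.log ω β

/-- The tail of the Cantor Normal Form of `β`: `ω ^ β₂ + ⋯ + ω ^ β_k`. -/
noncomputable def cnfTail (β : Ordinal) : Ordinal := β - cnfHead β

theorem cnfHead_le {β : Ordinal} (hβ : β ≠ 0) : cnfHead β ≤ β :=
  Ordinal.opow_log_le_self ω hβ

theorem cnfTail_lt {β : Ordinal} (hβ : β ≠ 0) : cnfTail β < β := by
  refine (Ordinal.sub_le_self β _).lt_of_ne fun h => ?_
  have h1 : cnfHead β + β = β := by
    have h2 := Ordinal.add_sub_cancel_of_le (cnfHead_le hβ)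
    rwa [show β - cnfHead β = β from h] at h2
  have h2 : cnfHead β * ω ≤ β := Ordinal.add_eq_right_iff_mul_omega0_le.1 h1
  have h3 : β < ω ^ Order.succ (Ordinal.log ω β) :=
    Ordinal.lt_opow_succ_log_self Ordinal.one_lt_omega0 β
  rw [Ordinal.opow_succ] at h3
  exact absurd h2 (not_le.2 h3)

/-- Auxiliary step: given the previous operation `prev = ⟨-,-⟩_{n-1}` and the value `z`
at `β = 0`, produce `⟨α, -⟩_n` by transfinite recursion via the CNF of `β`. -/
noncomputable def ordOpAux (prev : Ordinal → Ordinal → Ordinal) (z : Ordinal)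
    (α : Ordinal) : Ordinal → Ordinal :=
  WellFounded.fix Ordinal.lt_wf fun β IH =>
    if hβ0 : β = 0 then z                      -- k = 0
    else if β = 1 then α                       -- k = 1, β = 1
    else if hp : cnfHead β = β then            -- k = 1, β > 1 (additive principal limit)
      ⨆ γ : Set.Iio β, IH γ.1 γ.2
    else                                       -- k ≥ 2
      prev (IH (cnfHead β) ((cnfHead_le hβ0).lt_of_ne hp))
           (IH (cnfTail β) (cnfTail_lt hβ0))


universe u

lemma ordOpAux_zero (prev : Ordinal.{u} → Ordinal.{u} → Ordinal.{u}) (z α : Ordinal.{u}) :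
    ordOpAux prev z α (0 : Ordinal.{u}) = z := by
  rw [ordOpAux, WellFounded.fix_eq]; simp

lemma ordOpAux_one (prev : Ordinal.{u} → Ordinal.{u} → Ordinal.{u}) (z α : Ordinal.{u}) :
    ordOpAux prev z α (1 : Ordinal.{u}) = α := by
  rw [ordOpAux, WellFounded.fix_eq]; simp

lemma cnfHead_nat (b : ℕ) : cnfHead ((b : Ordinal.{u}) + 2) = 1 := by
  rw [cnfHead, Ordinal.log_eq_zero, Ordinal.opow_zero]
  exact ((Ordinal.nat_lt_omega0 (b + 2)).trans_eq' (by push_cast [add_assoc]; norm_num))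

lemma ordOpAux_nat (prev : Ordinal.{u} → Ordinal.{u} → Ordinal.{u}) (z α : Ordinal.{u}) (b : ℕ) :
    ordOpAux prev z α ((b : Ordinal.{u}) + 2) = prev α (ordOpAux prev z α ((b : Ordinal.{u}) + 1)) := by
  have h2 : (1 : Ordinal.{u}) < (b : Ordinal) + 2 :=
    lt_of_lt_of_le (by norm_num) (le_add_self : (2 : Ordinal.{u}) ≤ (b : Ordinal) + 2)
  have h0 : ((b : Ordinal.{u}) + 2) ≠ 0 := ((lt_trans zero_lt_one h2)).ne'
  have h1 : ((b : Ordinal.{u}) + 2) ≠ 1 := h2.ne'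
  have hh : cnfHead ((b : Ordinal.{u}) + 2) = 1 := cnfHead_nat b
  have hp : cnfHead ((b : Ordinal.{u}) + 2) ≠ (b : Ordinal) + 2 := by rw [hh]; exact h2.ne
  have ht : cnfTail ((b : Ordinal.{u}) + 2) = (b : Ordinal) + 1 := by
    rw [cnfTail, hh]
    have e1 : (b : Ordinal.{u}) + 2 = 1 + ((b : Ordinal) + 1) := by
      rw [show ((b : Ordinal.{u}) + 1) = ((b + 1 : ℕ) : Ordinal) by push_cast; rfl,
        Ordinal.one_add_natCast]
      simp [Order.succ_eq_add_one, add_assoc, one_add_one_eq_two]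
    rw [e1, Ordinal.add_sub_cancel]
  conv_lhs => rw [ordOpAux, WellFounded.fix_eq]
  rw [dif_neg h0, if_neg h1, dif_neg hp]
  show prev (ordOpAux prev z α (cnfHead ((b : Ordinal.{u}) + 2)))
      (ordOpAux prev z α (cnfTail ((b : Ordinal.{u}) + 2))) =
      prev α (ordOpAux prev z α ((b : Ordinal.{u}) + 1))
  rw [hh, ht, ordOpAux_one]

lemma hyp_one (n a : ℕ) : hyp (n + 2) a 1 = a := by
  induction n with
  | zero => simp [hyp]
  | succ n ih => rw [show (1:ℕ) = 0 + 1 from rfl, hyp]; simpa [hyp] using ih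

/-- The ordinal operations `⟨α, β⟩ₙ` of the paper (`n ≥ 1`; the value at `n = 0` is junk). -/
noncomputable def ordOp : ℕ → Ordinal → Ordinal → Ordinal
  | 0 => fun _ _ => 0
  | 1 => fun α β => α + β
  | 2 => fun α => ordOpAux (ordOp 1) 0 α
  | (n + 3) => fun α => ordOpAux (ordOp (n + 2)) 1 α

lemma ordOp_succ_nat : ∀ n (a b : ℕ),
    ordOp (n + 1) (a : Ordinal.{u}) (b : Ordinal) = (hyp (n + 1) a b : Ordinal) := by
  intro n
  induction n with
  | zero =>
    intro a b
    show (a : Ordinal) + b = _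
    rw [show hyp 1 a b = a + b from by simp [hyp]]
    push_cast
    rfl
  | succ n ih =>
    intro a b
    obtain ⟨z, hz, hzo⟩ : ∃ z : ℕ, ordOp (n + 2) (a : Ordinal.{u}) =
        ordOpAux (ordOp (n + 1)) (z : Ordinal) (a : Ordinal) ∧ hyp (n + 2) a 0 = z := by
      cases n with
      | zero => exact ⟨0, by rw [Nat.cast_zero]; rfl, by simp [hyp]⟩
      | succ m => exact ⟨1, by rw [Nat.cast_one]; rfl, by simp [hyp]⟩
    induction b with
    | zero =>
      rw [hz, Nat.cast_zero, ordOpAux_zero, hzo]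
    | succ b ihb =>
      cases b with
      | zero =>
        rw [hz, Nat.cast_one, ordOpAux_one, hyp_one]
      | succ c =>
        have hc : ((c + 1 + 1 : ℕ) : Ordinal.{u}) = (c : Ordinal) + 2 := by push_cast [add_assoc]; norm_num
        rw [hz, hc, ordOpAux_nat]
        have ih' : ordOpAux (ordOp (n + 1)) (z : Ordinal) (a : Ordinal) ((c : Ordinal) + 1)
            = (hyp (n + 2) a (c + 1) : Ordinal) := by
          rw [show (c : Ordinal.{u}) + 1 = ((c + 1 : ℕ) : Ordinal) from by push_cast; rfl, ← hz]
          exact ihb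
        rw [ih', ih a (hyp (n + 2) a (c + 1))]
        rw [show hyp (n + 2) a (c + 1 + 1) = hyp (n + 1) a (hyp (n + 2) a (c + 1)) from by
          rw [hyp]]

/-- For every `n ≥ 1` and all natural numbers `a, b` (viewed as finite ordinals),
the ordinal operation `⟨a, b⟩ₙ` equals the hyperoperation `[a, b]ₙ`. -/
theorem ordOp_natCast (n : ℕ) (hn : 1 ≤ n) (a b : ℕ) :
    ordOp n (a : Ordinal) (b : Ordinal) = (hyp n a b : Ordinal) := by
  obtain ⟨m, rfl⟩ := Nat.exists_eq_add_of_le hn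
  rw [Nat.add_comm]
  exact ordOp_succ_nat m a b
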